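/- Let G be a multigraph with χ'(G) = k+1 ≥ Δ(G)+2 and let e be a k-critical edge of G. Then G−e has a unique maximal k-dense subgraph H containing both endvertices of e, and e is a k-critical edge of H+e. -/

import Mathlib

/-- A finite multigraph: finite vertex and edge types, each edge has an unordered pair of
endvertices, and there are no loops. -/
structure Multigraph where
  V : Type
  E : Type
  [fintypeV : Fintype V]
  [fintypeE : Fintype E]
  ends : E → Sym2 V
  loopless : ∀ e, ¬ (ends e).IsDiag

attribute [instance] Multigraph.fintypeV Multigraph.fintypeE

namespace Multigraph

section Basic

variable (G : Multigraph)

/-- The degree of a vertex: the number of edges incident with it. -/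
noncomputable def degree (v : G.V) : ℕ := {e : G.E | v ∈ G.ends e}.ncard

/-- The maximum degree Δ(G). -/
noncomputable def maxDegree : ℕ := sSup (Set.range G.degree)

/-- The number of edges joining `x` and `y` (the multiplicity e_G(x,y)). -/
noncomputable def mult (x y : G.V) : ℕ := {e : G.E | G.ends e = s(x, y)}.ncard

/-- The maximum multiplicity μ(G). -/
noncomputable def maxMult : ℕ := sSup {m : ℕ | ∃ x y : G.V, G.mult x y = m}

/-- `c` is a proper edge coloring, with palette `{1,…,k}`, of the edges in `D`
(edges sharing an endvertex get distinct colors). -/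
def IsProperColoringOn (k : ℕ) (D : Set G.E) (c : G.E → ℕ) : Prop :=
  (∀ e ∈ D, c e ∈ Set.Icc 1 k) ∧
  ∀ e ∈ D, ∀ f ∈ D, e ≠ f → (∃ v, v ∈ G.ends e ∧ v ∈ G.ends f) → c e ≠ c f

/-- A proper `k`-edge-coloring of all of `G`. -/
def IsProperColoring (k : ℕ) (c : G.E → ℕ) : Prop := G.IsProperColoringOn k Set.univ c

/-- The chromatic index of the subgraph of `G` consisting of the edges in `D`
(vertices are irrelevant for edge colorings). -/
noncomputable def chromIndexOn (D : Set G.E) : ℕ := sInf {k | ∃ c, G.IsProperColoringOn k D c}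

/-- The chromatic index χ'(G). -/
noncomputable def chromIndex : ℕ := G.chromIndexOn Set.univ

/-- The set of colors of the palette `{1,…,k}` missing at `v`, where only the edges in `D`
are regarded as colored. -/
def missingOn (k : ℕ) (D : Set G.E) (c : G.E → ℕ) (v : G.V) : Set ℕ :=
  {i | i ∈ Set.Icc 1 k ∧ ∀ e ∈ D, v ∈ G.ends e → c e ≠ i}

/-- `X` is elementary: missing-color sets of distinct vertices of `X` are disjoint. -/
def IsElementaryOn (k : ℕ) (D : Set G.E) (c : G.E → ℕ) (X : Set G.V) : Prop :=
  ∀ u ∈ X, ∀ v ∈ X, u ≠ v → G.missingOn k D c u ∩ G.missingOn k D c v = ∅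

/-- The boundary ∂_G(X): edges with an endvertex in `X` and an endvertex outside `X`. -/
def boundary (X : Set G.V) : Set G.E :=
  {e | (∃ v ∈ G.ends e, v ∈ X) ∧ (∃ v ∈ G.ends e, v ∉ X)}

/-- `X` is strongly closed (w.r.t. the coloring `c` of the edges in `D`): every color on a
boundary edge of `X` is present at every vertex of `X`, and the colors on the boundary edges
are pairwise distinct. -/
def IsStronglyClosedOn (D : Set G.E) (c : G.E → ℕ) (X : Set G.V) : Prop :=
  (∀ e ∈ G.boundary X ∩ D, ∀ v ∈ X, ∃ f ∈ D, v ∈ G.ends f ∧ c f = c e) ∧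
  ∀ e ∈ G.boundary X ∩ D, ∀ f ∈ G.boundary X ∩ D, e ≠ f → c e ≠ c f

end Basic

/-- A subgraph of `G`: a set of vertices together with a set of edges all of whose
endvertices belong to the vertex set. -/
structure Subgraph (G : Multigraph) where
  verts : Set G.V
  edges : Set G.E
  support : ∀ e ∈ edges, ∀ v, v ∈ G.ends e → v ∈ verts

section Sub

variable (G : Multigraph)

/-- The whole graph, as a subgraph of itself. -/
def top : G.Subgraph := ⟨Set.univ, Set.univ, fun _ _ _ _ => Set.mem_univ _⟩

/-- `H` is a `k`-dense subgraph: it has an odd number of vertices and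
`|E(H)| = (|V(H)|-1)·k/2`. -/
def IsDense (k : ℕ) (H : G.Subgraph) : Prop :=
  Odd H.verts.ncard ∧ 2 * H.edges.ncard = (H.verts.ncard - 1) * k

/-- `H` is a `k`-dense subgraph of `G - F` (the graph obtained by deleting the edges of `F`). -/
def IsDenseIn (F : Set G.E) (k : ℕ) (H : G.Subgraph) : Prop :=
  H.edges ∩ F = ∅ ∧ G.IsDense k H

/-- `H` is a maximal `k`-dense subgraph of `G - F`. -/
def IsMaximalDenseIn (F : Set G.E) (k : ℕ) (H : G.Subgraph) : Prop :=
  G.IsDenseIn F k H ∧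
  ∀ H' : G.Subgraph, G.IsDenseIn F k H' → H.verts ⊆ H'.verts → H.edges ⊆ H'.edges →
    H.verts = H'.verts ∧ H.edges = H'.edges

/-- The density Γ(H) of a subgraph `H` of `G`:
`max { 2|E(H')|/(|V(H')|-1) : H' ⊆ H, |V(H')| ≥ 3 odd }` (and `0` if there is no such `H'`,
since in `ℝ` the supremum of the empty set is `0`). -/
noncomputable def densityOf (H : G.Subgraph) : ℝ :=
  sSup {x : ℝ | ∃ H' : G.Subgraph, H'.verts ⊆ H.verts ∧ H'.edges ⊆ H.edges ∧
    3 ≤ H'.verts.ncard ∧ Odd H'.verts.ncard ∧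
    x = 2 * (H'.edges.ncard : ℝ) / ((H'.verts.ncard : ℝ) - 1)}

/-- The density Γ(G). -/
noncomputable def density : ℝ := G.densityOf G.top

/-- `e` is a `k`-critical edge of `G`: `χ'(G-e) = k < χ'(G) = k+1`. -/
def IsCriticalEdge (k : ℕ) (e : G.E) : Prop :=
  G.chromIndexOn {e}ᶜ = k ∧ G.chromIndex = k + 1

/-- Degree of `v` in the subgraph consisting of the edges in `D`. -/
noncomputable def degreeOn (D : Set G.E) (v : G.V) : ℕ := {e : G.E | e ∈ D ∧ v ∈ G.ends e}.ncard

/-- Maximum degree of the subgraph consisting of the edges in `D`. -/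
noncomputable def maxDegreeOn (D : Set G.E) : ℕ := sSup (Set.range (G.degreeOn D))

/-- Multiplicity of the pair `x,y` in the subgraph consisting of the edges in `D`. -/
noncomputable def multOn (D : Set G.E) (x y : G.V) : ℕ :=
  {e : G.E | e ∈ D ∧ G.ends e = s(x, y)}.ncard

/-- Maximum multiplicity of the subgraph consisting of the edges in `D`. -/
noncomputable def maxMultOn (D : Set G.E) : ℕ := sSup {m : ℕ | ∃ x y : G.V, G.multOn D x y = m}

/-- The simple graph underlying the subgraph of `G` with edge set `D`. -/
def simpleOn (D : Set G.E) : SimpleGraph G.V where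
  Adj a b := a ≠ b ∧ ∃ e ∈ D, G.ends e = s(a, b)
  symm := by
    constructor
    rintro a b ⟨hab, e, he, hh⟩
    exact ⟨hab.symm, e, he, hh.trans Sym2.eq_swap⟩
  loopless := by constructor; rintro a ⟨h, -⟩; exact h rfl

/-- The diameter (in `ℕ∞`) of the subgraph with vertex set `S` and edge set `D`:
the greatest distance between a pair of its vertices. -/
noncomputable def diamOn (S : Set G.V) (D : Set G.E) : ℕ∞ :=
  sSup {d : ℕ∞ | ∃ u ∈ S, ∃ v ∈ S, (G.simpleOn D).edist u v = d}

/-- The distance (in `ℕ∞`) between two edges of `G`: the length of a shortest path connecting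
an endvertex of `e` and an endvertex of `f`. -/
noncomputable def edgeDist (e f : G.E) : ℕ∞ :=
  sInf {d : ℕ∞ | ∃ u v : G.V, u ∈ G.ends e ∧ v ∈ G.ends f ∧
    (G.simpleOn Set.univ).edist u v = d}

/-- A matching: a set of edges no two of which share an endvertex. -/
def IsMatching (M : Set G.E) : Prop :=
  ∀ e ∈ M, ∀ f ∈ M, e ≠ f → ∀ v : G.V, v ∈ G.ends e → v ∉ G.ends f

/-- An edge `e ∈ E_G(x,y)` is fully `G`-saturated if `d_G(x) = d_G(y) = Δ(G)` and
`e_G(x,y) = μ(G)`. -/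
def IsFullySaturated (e : G.E) : Prop :=
  ∃ x y : G.V, G.ends e = s(x, y) ∧ G.degree x = G.maxDegree ∧ G.degree y = G.maxDegree ∧
    G.mult x y = G.maxMult

/-- One step along a Kempe `(α,β)`-chain: an edge of `D` colored `α` or `β` joining the
two vertices. -/
def chainStep (D : Set G.E) (c : G.E → ℕ) (α β : ℕ) (a b : G.V) : Prop :=
  ∃ e ∈ D, G.ends e = s(a, b) ∧ (c e = α ∨ c e = β)

/-- `u` and `v` lie on the same `(α,β)`-chain, i.e. `P_u(α,β) = P_v(α,β)`. -/
def sameChain (D : Set G.E) (c : G.E → ℕ) (α β : ℕ) (u v : G.V) : Prop :=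
  Relation.ReflTransGen (G.chainStep D c α β) u v

end Sub

/-- The Goldberg–Seymour theorem (proved by Chen, Jing and Zang), as a hypothesis:
every multigraph `G'` with `χ'(G') ≥ Δ(G')+2` satisfies `χ'(G') = ⌈Γ(G')⌉`. -/
def GoldbergSeymour : Prop :=
  ∀ G' : Multigraph, G'.maxDegree + 2 ≤ G'.chromIndex → (G'.chromIndex : ℤ) = ⌈G'.density⌉

/-- A (general) multi-fan at `x` with respect to the edge `e₀ ∈ E_G(x,y₀)` and the coloring
`c` of the edges in `D` with palette `{1,…,k}`: a sequence `(x, e₀, y₀, e₁, y₁, …, e_p, y_p)`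
of vertices and pairwise distinct edges with `e_i ∈ E_G(x, y_i)` and, for `i ≥ 1`,
`c(e_i)` missing at `y_j` for some `j < i`. -/
structure MultiFan (G : Multigraph) (k : ℕ) (D : Set G.E) (c : G.E → ℕ)
    (x : G.V) (e₀ : G.E) (y₀ : G.V) where
  p : ℕ
  edge : Fin (p + 1) → G.E
  vx : Fin (p + 1) → G.V
  edge_zero : edge 0 = e₀
  vx_zero : vx 0 = y₀
  ends_eq : ∀ i, G.ends (edge i) = s(x, vx i)
  edge_inj : Function.Injective edge
  fan_cond : ∀ i : Fin (p + 1), i ≠ 0 →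
    ∃ j : Fin (p + 1), j < i ∧ c (edge i) ∈ G.missingOn k D c (vx j)

namespace MultiFan

variable {G : Multigraph} {k : ℕ} {D : Set G.E} {c : G.E → ℕ} {x : G.V} {e₀ : G.E} {y₀ : G.V}

/-- The vertex set `V(F)` of a multi-fan. -/
def verts (F : MultiFan G k D c x e₀ y₀) : Set G.V := insert x (Set.range F.vx)

/-- `F` is a subsequence of `F'`. -/
def Subseq (F F' : MultiFan G k D c x e₀ y₀) : Prop :=
  ∃ ι : Fin (F.p + 1) → Fin (F'.p + 1), StrictMono ι ∧
    ∀ i, F'.edge (ι i) = F.edge i ∧ F'.vx (ι i) = F.vx i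

/-- `F` is a maximal multi-fan: no multi-fan contains it as a proper subsequence. -/
def IsMaximal (F : MultiFan G k D c x e₀ y₀) : Prop :=
  ∀ F' : MultiFan G k D c x e₀ y₀, F.Subseq F' → F'.p = F.p

/-- `F` contains no `i`-edge. -/
def NoColor (F : MultiFan G k D c x e₀ y₀) (i : ℕ) : Prop :=
  ∀ j, F.edge j ∈ D → c (F.edge j) ≠ i

/-- `F` is a multi-fan without `i`-edges that is maximal among such. -/
def IsMaximalWithout (F : MultiFan G k D c x e₀ y₀) (i : ℕ) : Prop :=
  F.NoColor i ∧
  ∀ F' : MultiFan G k D c x e₀ y₀, F'.NoColor i → F.Subseq F' → F'.p = F.p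

/-- `e_F(x,z)`: the number of edges of the multi-fan `F` joining `x` and `z`. -/
noncomputable def multAt (F : MultiFan G k D c x e₀ y₀) (z : G.V) : ℕ :=
  Nat.card {j : Fin (F.p + 1) // F.vx j = z}

end MultiFan

end Multigraph

namespace Multigraph

variable {G : Multigraph}

theorem Subgraph.ext' {H K : G.Subgraph} (h1 : H.verts = K.verts)
    (h2 : H.edges = K.edges) : H = K := by
  cases H; cases K; simp_all

theorem exists_ends (f : G.E) : ∃ x y : G.V, x ≠ y ∧ G.ends f = s(x, y) := by
  obtain ⟨⟨x, y⟩, hxy⟩ := Quot.exists_rep (G.ends f)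
  refine ⟨x, y, ?_, hxy.symm⟩
  intro h
  exact G.loopless f (by rw [← hxy, h]; exact Sym2.mk_isDiag_iff.2 rfl)

/-- The edges of `D` with all endvertices in `S`. -/
def indSet (G : Multigraph) (D : Set G.E) (S : Set G.V) : Set G.E :=
  {f | f ∈ D ∧ ∀ v ∈ G.ends f, v ∈ S}

theorem matching_cover {k : ℕ} {D : Set G.E} {c : G.E → ℕ}
    (hc : G.IsProperColoringOn k D c) {i : ℕ} {F : Set G.E} (hFD : F ⊆ D)
    (hcol : ∀ f ∈ F, c f = i) :
    {v | ∃ f ∈ F, v ∈ G.ends f}.ncard = 2 * F.ncard := by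
  classical
  have hF : F.Finite := Set.toFinite F
  set Ft := hF.toFinset with hFt
  have hdisj : ∀ f ∈ Ft, ∀ g ∈ Ft, f ≠ g →
      Disjoint ((Set.toFinite {v | v ∈ G.ends f}).toFinset)
        ((Set.toFinite {v | v ∈ G.ends g}).toFinset) := by
    intro f hf g hg hfg
    rw [Finset.disjoint_left]
    intro v hvf hvg
    rw [Set.Finite.mem_toFinset] at hvf hvg
    have hf' : f ∈ F := hF.mem_toFinset.1 hf
    have hg' : g ∈ F := hF.mem_toFinset.1 hg
    exact hc.2 f (hFD hf') g (hFD hg') hfg ⟨v, hvf, hvg⟩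
      ((hcol f hf').trans (hcol g hg').symm)
  have hset : {v | ∃ f ∈ F, v ∈ G.ends f} =
      ↑(Ft.biUnion (fun f => (Set.toFinite {v | v ∈ G.ends f}).toFinset)) := by
    ext v
    simp only [Set.mem_setOf_eq, Finset.coe_biUnion, Set.mem_iUnion,
      Finset.mem_coe, Finset.mem_biUnion, Set.Finite.mem_toFinset, hFt,
      Set.Finite.mem_toFinset]
    tauto
  rw [hset, Set.ncard_coe_finset, Finset.card_biUnion hdisj]
  have hcard2 : ∀ f ∈ Ft, ((Set.toFinite {v | v ∈ G.ends f}).toFinset).card = 2 := by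
    intro f _
    obtain ⟨x, y, hxy, hxyf⟩ := exists_ends f
    have : {v | v ∈ G.ends f} = {x, y} := by
      ext v; simp [hxyf, Sym2.mem_iff]
    rw [← Set.ncard_eq_toFinset_card _ (Set.toFinite _), this]
    · exact Set.ncard_pair hxy
  rw [Finset.sum_congr rfl hcard2, Finset.sum_const, smul_eq_mul,
    Set.ncard_eq_toFinset_card F hF]
  ring

theorem ncard_color_partition {k : ℕ} {c : G.E → ℕ} {F : Set G.E}
    (hIcc : ∀ f ∈ F, c f ∈ Set.Icc 1 k) :
    F.ncard = ∑ i ∈ Finset.Icc 1 k, {f ∈ F | c f = i}.ncard := by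
  classical
  have hF : F.Finite := Set.toFinite F
  have key : hF.toFinset = (Finset.Icc 1 k).biUnion
      (fun i => (Set.toFinite {f ∈ F | c f = i}).toFinset) := by
    ext f
    simp only [Set.Finite.mem_toFinset, Finset.mem_biUnion, Set.mem_setOf_eq]
    constructor
    · intro hf
      exact ⟨c f, by simpa using (hIcc f hf), hf, rfl⟩
    · rintro ⟨i, -, hf, -⟩; exact hf
  have hdisj : ∀ i ∈ Finset.Icc 1 k, ∀ j ∈ Finset.Icc 1 k, i ≠ j →
      Disjoint ((Set.toFinite {f ∈ F | c f = i}).toFinset)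
        ((Set.toFinite {f ∈ F | c f = j}).toFinset) := by
    intro i _ j _ hij
    rw [Finset.disjoint_left]
    intro f hfi hfj
    rw [Set.Finite.mem_toFinset] at hfi hfj
    exact hij (hfi.2.symm.trans hfj.2)
  rw [Set.ncard_eq_toFinset_card F hF, key, Finset.card_biUnion hdisj]
  refine Finset.sum_congr rfl fun i _ => ?_
  rw [← Set.ncard_eq_toFinset_card _ (Set.toFinite _)]

theorem color_class_bound {k : ℕ} {D : Set G.E} {c : G.E → ℕ}
    (hc : G.IsProperColoringOn k D c) {S : Set G.V} (hS : Odd S.ncard)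
    {i : ℕ} {F : Set G.E} (hFD : F ⊆ D) (hcol : ∀ f ∈ F, c f = i)
    (hFS : ∀ f ∈ F, ∀ v ∈ G.ends f, v ∈ S) :
    2 * F.ncard + 1 ≤ S.ncard := by
  have h1 := matching_cover hc hFD hcol
  have hsub : {v | ∃ f ∈ F, v ∈ G.ends f} ⊆ S := by
    rintro v ⟨f, hf, hvf⟩
    exact hFS f hf v hvf
  have h2 : 2 * F.ncard ≤ S.ncard := h1 ▸ Set.ncard_le_ncard hsub (Set.toFinite S)
  rcases Nat.lt_or_ge (2 * F.ncard) S.ncard with h | h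
  · omega
  · exfalso
    obtain ⟨m, hm⟩ := hS
    omega

theorem bound_odd {j : ℕ} {D : Set G.E} {c : G.E → ℕ}
    (hc : G.IsProperColoringOn j D c) {S : Set G.V} (hS : Odd S.ncard)
    {F : Set G.E} (hFD : F ⊆ D) (hFS : ∀ f ∈ F, ∀ v ∈ G.ends f, v ∈ S) :
    2 * F.ncard + j ≤ j * S.ncard := by
  have hpart := ncard_color_partition (G := G) (k := j) (c := c) (F := F)
    (fun f hf => hc.1 f (hFD hf))
  have hbd : ∀ i ∈ Finset.Icc 1 j, 2 * {f ∈ F | c f = i}.ncard + 1 ≤ S.ncard := by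
    intro i _
    exact color_class_bound hc hS (fun f hf => hFD hf.1) (fun f hf => hf.2)
      (fun f hf => hFS f hf.1)
  have hsum : ∑ i ∈ Finset.Icc 1 j, (2 * {f ∈ F | c f = i}.ncard + 1) ≤
      ∑ _i ∈ Finset.Icc 1 j, S.ncard := Finset.sum_le_sum hbd
  rw [Finset.sum_add_distrib, ← Finset.mul_sum, Finset.sum_const, Finset.sum_const,
    Nat.card_Icc, smul_eq_mul, smul_eq_mul, mul_one, Nat.add_sub_cancel] at hsum
  rw [hpart]
  omega

theorem covered_of_dense {k : ℕ} {D : Set G.E} {c : G.E → ℕ}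
    (hc : G.IsProperColoringOn k D c) {S : Set G.V} (hS : Odd S.ncard)
    (hdense : 2 * (G.indSet D S).ncard + k = k * S.ncard)
    {i : ℕ} (hi : i ∈ Set.Icc 1 k) {u w : G.V} (hu : u ∈ S) (hw : w ∈ S)
    (hu' : ∀ f ∈ G.indSet D S, c f = i → u ∉ G.ends f)
    (hw' : ∀ f ∈ G.indSet D S, c f = i → w ∉ G.ends f) : u = w := by
  classical
  set Fi : ℕ → Set G.E := fun j => {f ∈ G.indSet D S | c f = j} with hFi
  set Ci : ℕ → Set G.V := fun j => {v | ∃ f ∈ Fi j, v ∈ G.ends f} with hCi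
  have hIndD : G.indSet D S ⊆ D := fun f hf => hf.1
  have hCcard : ∀ j, (Ci j).ncard = 2 * (Fi j).ncard := fun j =>
    matching_cover hc (fun f hf => hIndD hf.1) (fun f hf => hf.2)
  have hCsub : ∀ j, Ci j ⊆ S := by
    rintro j v ⟨f, hf, hvf⟩
    exact hf.1.2 v hvf
  have hCle : ∀ j ∈ Finset.Icc 1 k, (Ci j).ncard + 1 ≤ S.ncard := by
    intro j _
    rw [hCcard j]
    exact color_class_bound hc hS (fun f hf => hIndD hf.1) (fun f hf => hf.2)
      (fun f hf v hv => hf.1.2 v hv)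
  have hpart := ncard_color_partition (G := G) (k := k) (c := c) (F := G.indSet D S)
    (fun f hf => hc.1 f (hIndD hf))
  have hStotal : ∑ j ∈ Finset.Icc 1 k, (Ci j).ncard = k * S.ncard - k := by
    have : ∑ j ∈ Finset.Icc 1 k, (Ci j).ncard
        = ∑ j ∈ Finset.Icc 1 k, 2 * (Fi j).ncard := by
      exact Finset.sum_congr rfl fun j _ => hCcard j
    rw [this, ← Finset.mul_sum, ← hpart]
    omega
  have hik : i ∈ Finset.Icc 1 k := by
    simp only [Finset.mem_Icc]; exact ⟨hi.1, hi.2⟩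
  have hCieq : (Ci i).ncard = S.ncard - 1 := by
    by_contra hne
    have hilt : (Ci i).ncard < S.ncard - 1 := by
      have := hCle i hik; omega
    have hstrict : ∑ j ∈ Finset.Icc 1 k, (Ci j).ncard <
        ∑ _j ∈ Finset.Icc 1 k, (S.ncard - 1) := by
      refine Finset.sum_lt_sum (fun j hj => by have := hCle j hj; omega) ⟨i, hik, hilt⟩
    rw [hStotal, Finset.sum_const, Nat.card_Icc, Nat.add_sub_cancel, smul_eq_mul,
      Nat.mul_sub_one] at hstrict
    have hk1 : 1 ≤ k := hi.1.trans hi.2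
    have hS1 : 1 ≤ S.ncard := by
      obtain ⟨m, hm⟩ := hS; omega
    have : k ≤ k * S.ncard := Nat.le_mul_of_pos_right k hS1
    omega
  have hdiff : (S \ Ci i).ncard = 1 := by
    rw [Set.ncard_diff (hCsub i) (Set.toFinite _), hCieq]
    have hS1 : 1 ≤ S.ncard := by obtain ⟨m, hm⟩ := hS; omega
    omega
  obtain ⟨a, ha⟩ := Set.ncard_eq_one.1 hdiff
  have hmem : ∀ v ∈ S, (∀ f ∈ G.indSet D S, c f = i → v ∉ G.ends f) → v ∈ S \ Ci i := by
    intro v hv hv'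
    refine ⟨hv, ?_⟩
    rintro ⟨f, hf, hvf⟩
    exact hv' f hf.1 hf.2 hvf
  have h1 : u ∈ ({a} : Set G.V) := ha ▸ hmem u hu hu'
  have h2 : w ∈ ({a} : Set G.V) := ha ▸ hmem w hw hw'
  rw [Set.mem_singleton_iff] at h1 h2
  rw [h1, h2]

theorem inter_odd {k : ℕ} {D : Set G.E} {c : G.E → ℕ}
    (hc : G.IsProperColoringOn k D c) {V1 V2 : Set G.V}
    (h1 : Odd V1.ncard) (h2 : Odd V2.ncard)
    (hd1 : 2 * (G.indSet D V1).ncard + k = k * V1.ncard)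
    (hd2 : 2 * (G.indSet D V2).ncard + k = k * V2.ncard)
    {x : G.V} (hx1 : x ∈ V1) (hx2 : x ∈ V2)
    (hxdeg : {f | f ∈ D ∧ x ∈ G.ends f}.ncard < k) :
    Odd (V1 ∩ V2).ncard := by
  classical
  -- find a color missing at x
  obtain ⟨i, hi, hmiss⟩ : ∃ i ∈ Set.Icc 1 k, ∀ f ∈ D, x ∈ G.ends f → c f ≠ i := by
    by_contra hcon
    push_neg at hcon
    have hsub : Set.Icc 1 k ⊆ c '' {f | f ∈ D ∧ x ∈ G.ends f} := by
      intro i hi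
      obtain ⟨f, hfD, hfx, hfc⟩ := hcon i hi
      exact ⟨f, ⟨hfD, hfx⟩, hfc⟩
    have hk : (Set.Icc 1 k).ncard = k := by
      rw [← Finset.coe_Icc, Set.ncard_coe_finset, Nat.card_Icc, Nat.add_sub_cancel]
    have := (Set.ncard_le_ncard hsub (Set.toFinite _)).trans
      (Set.ncard_image_le (Set.toFinite _))
    omega
  set T := V1 ∩ V2 with hT
  set W : Set G.V := {v | ∃ f ∈ {g ∈ G.indSet D T | c g = i}, v ∈ G.ends f} with hW
  have hWcard : W.ncard = 2 * {g ∈ G.indSet D T | c g = i}.ncard :=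
    matching_cover hc (fun f hf => hf.1.1) (fun f hf => hf.2)
  have hxW : x ∉ W := by
    rintro ⟨f, hf, hxf⟩
    exact hmiss f hf.1.1 hxf hf.2
  have hWT : W ⊆ T := by
    rintro v ⟨f, hf, hvf⟩
    exact hf.1.2 v hvf
  have hTW : T = insert x W := by
    ext v
    constructor
    · intro hv
      by_cases hvx : v = x
      · exact hvx ▸ Set.mem_insert x W
      · refine Set.mem_insert_iff.2 (Or.inr ?_)
        have hxu1 : ∀ f ∈ G.indSet D V1, c f = i → x ∉ G.ends f :=
          fun f hf hfc hxf => hmiss f hf.1 hxf hfc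
        have hxu2 : ∀ f ∈ G.indSet D V2, c f = i → x ∉ G.ends f :=
          fun f hf hfc hxf => hmiss f hf.1 hxf hfc
        have hv1 : ¬ (∀ f ∈ G.indSet D V1, c f = i → v ∉ G.ends f) := by
          intro hv'
          exact hvx (covered_of_dense hc h1 hd1 hi hv.1 hx1 hv' hxu1)
        have hv2 : ¬ (∀ f ∈ G.indSet D V2, c f = i → v ∉ G.ends f) := by
          intro hv'
          exact hvx (covered_of_dense hc h2 hd2 hi hv.2 hx2 hv' hxu2)
        push_neg at hv1 hv2
        obtain ⟨f, hf, hfc, hvf⟩ := hv1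
        obtain ⟨g, hg, hgc, hvg⟩ := hv2
        have hfg : f = g := by
          by_contra hne
          exact hc.2 f hf.1 g hg.1 hne ⟨v, hvf, hvg⟩ (hfc.trans hgc.symm)
        exact ⟨f, ⟨⟨hf.1, fun u hu => ⟨hf.2 u hu, hg.2 u (hfg ▸ hu)⟩⟩, hfc⟩, hvf⟩
    · intro hv
      rcases Set.mem_insert_iff.1 hv with hvx | hvW
      · exact hvx ▸ ⟨hx1, hx2⟩
      · exact hWT hvW
  have : T.ncard = W.ncard + 1 := by
    rw [hTW, Set.ncard_insert_of_notMem hxW (Set.toFinite W)]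
  exact ⟨{g ∈ G.indSet D T | c g = i}.ncard, by omega⟩

theorem exists_coloring (D : Set G.E) :
    ∃ c, G.IsProperColoringOn (Fintype.card G.E) D c := by
  refine ⟨fun f => (Fintype.equivFin G.E f : ℕ) + 1, fun f _ => ?_, fun f _ g _ hfg _ => ?_⟩
  · have h := (Fintype.equivFin G.E f).isLt
    simp only [Set.mem_Icc]
    omega
  · intro hcc
    have hcc' : ((Fintype.equivFin G.E f : ℕ)) = (Fintype.equivFin G.E g : ℕ) := by
      simpa using hcc
    exact hfg ((Fintype.equivFin G.E).injective (Fin.val_injective hcc'))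

theorem chromIndexOn_witness (D : Set G.E) :
    ∃ c, G.IsProperColoringOn (G.chromIndexOn D) D c := by
  have h : sInf {k | ∃ c, G.IsProperColoringOn k D c} ∈ {k | ∃ c, G.IsProperColoringOn k D c} :=
    Nat.sInf_mem ⟨_, exists_coloring D⟩
  exact h

theorem IsProperColoringOn.mono {k : ℕ} {D D' : Set G.E} {c : G.E → ℕ}
    (h : G.IsProperColoringOn k D' c) (hDD : D ⊆ D') : G.IsProperColoringOn k D c :=
  ⟨fun f hf => h.1 f (hDD hf), fun f hf g hg => h.2 f (hDD hf) g (hDD hg)⟩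

theorem chromIndexOn_le {D : Set G.E} {j : ℕ} {c : G.E → ℕ}
    (h : G.IsProperColoringOn j D c) : G.chromIndexOn D ≤ j := by
  have h0 : sInf {i | ∃ c, G.IsProperColoringOn i D c} ≤ j := Nat.sInf_le ⟨c, h⟩
  exact h0

theorem le_chromIndexOn {D : Set G.E} {j : ℕ}
    (h : ∀ i (c : G.E → ℕ), G.IsProperColoringOn i D c → j ≤ i) :
    j ≤ G.chromIndexOn D := by
  have h0 : j ≤ sInf {i | ∃ c, G.IsProperColoringOn i D c} :=
    le_csInf ⟨_, exists_coloring D⟩ (fun i hi => by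
      obtain ⟨c0, hc0⟩ := hi; exact h i c0 hc0)
  exact h0

theorem mul_pred_add {k n : ℕ} (h : 1 ≤ n) : k * (n - 1) + k = k * n := by
  conv_rhs => rw [← Nat.sub_add_cancel h]
  rw [mul_add, mul_one]

theorem ge_of_bounds {j k n E : ℕ} (h3 : 3 ≤ n) (hE : 2 * E + k = k * n)
    (hj : 2 * E + j ≤ j * n) : k ≤ j := by
  have e1 : k * (n - 1) + k = k * n := mul_pred_add (by omega)
  have e2 : j * (n - 1) + j = j * n := mul_pred_add (by omega)
  have h1 : k * (n - 1) ≤ j * (n - 1) := by omega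
  exact Nat.le_of_mul_le_mul_right h1 (by omega)

theorem ge_of_bounds' {j k n E : ℕ} (h3 : 3 ≤ n) (hE : 2 * E + k = k * n)
    (hj : 2 * (E + 1) + j ≤ j * n) : k + 1 ≤ j := by
  have e1 : k * (n - 1) + k = k * n := mul_pred_add (by omega)
  have e2 : j * (n - 1) + j = j * n := mul_pred_add (by omega)
  by_contra h
  push_neg at h
  have : j * (n - 1) ≤ k * (n - 1) := Nat.mul_le_mul (by omega) (le_refl _)
  omega

/-- From a `k`-dense subgraph whose edges avoid `e`, the induced edge set on its vertex set
satisfies the same count, and the edges are exactly the induced edges. -/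
theorem dense_ind {k : ℕ} {D : Set G.E} {c : G.E → ℕ} (hc : G.IsProperColoringOn k D c)
    {J : G.Subgraph} (hJD : J.edges ⊆ D) (hJ : G.IsDense k J) :
    2 * (G.indSet D J.verts).ncard + k = k * J.verts.ncard ∧
      J.edges = G.indSet D J.verts := by
  have hJsub : J.edges ⊆ G.indSet D J.verts := fun f hf => ⟨hJD hf, J.support f hf⟩
  have hb : 2 * (G.indSet D J.verts).ncard + k ≤ k * J.verts.ncard :=
    bound_odd hc hJ.1 (fun f hf => hf.1) (fun f hf v hv => hf.2 v hv)
  have hn1 : 1 ≤ J.verts.ncard := by obtain ⟨m, hm⟩ := hJ.1; omega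
  have hmul : 2 * J.edges.ncard + k = k * J.verts.ncard := by
    rw [hJ.2, mul_comm _ k, mul_pred_add hn1]
  have hle : J.edges.ncard ≤ (G.indSet D J.verts).ncard :=
    Set.ncard_le_ncard hJsub (Set.toFinite _)
  have hcard : (G.indSet D J.verts).ncard ≤ J.edges.ncard := by omega
  exact ⟨by omega, Set.eq_of_subset_of_ncard_le hJsub hcard (Set.toFinite _)⟩

end Multigraph
/-- **Lemma 2.4(a).** (Assuming the Goldberg–Seymour theorem.) If `χ'(G) = k+1 ≥ Δ(G)+2` and
`e` is a `k`-critical edge of `G`, then `G-e` has a unique maximal `k`-dense subgraph `H`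
containing both endvertices of `e`, and `e` is also a `k`-critical edge of `H+e`. -/
theorem unique_maximal_dense_subgraph (hGS : Multigraph.GoldbergSeymour)
    (G : Multigraph) (k : ℕ)
    (hχ : G.chromIndex = k + 1) (hΔ : G.maxDegree + 2 ≤ k + 1)
    (e : G.E) (he : G.IsCriticalEdge k e) :
    ∃ H : G.Subgraph,
      (G.IsMaximalDenseIn {e} k H ∧ (∀ v, v ∈ G.ends e → v ∈ H.verts) ∧
        G.chromIndexOn H.edges = k ∧ G.chromIndexOn (insert e H.edges) = k + 1) ∧
      ∀ H' : G.Subgraph, G.IsMaximalDenseIn {e} k H' → (∀ v, v ∈ G.ends e → v ∈ H'.verts) →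
        H' = H := by
  classical
  obtain ⟨x, y, hxy, hends⟩ := Multigraph.exists_ends e
  have hxe : x ∈ G.ends e := by rw [hends]; exact Sym2.mem_mk_left x y
  have hye : y ∈ G.ends e := by rw [hends]; exact Sym2.mem_mk_right x y
  have hk1 : 1 ≤ k := by omega
  set D : Set G.E := {e}ᶜ with hDdef
  have hmemD : ∀ f : G.E, f ∈ D ↔ f ≠ e := by intro f; simp [hDdef]
  obtain ⟨c, hc⟩ : ∃ c, G.IsProperColoringOn k D c := by
    have h0 := Multigraph.chromIndexOn_witness (G := G) ({e}ᶜ)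
    rw [he.1] at h0
    exact h0
  -- Goldberg–Seymour gives a subgraph of density exceeding k
  have hGSG : (G.chromIndex : ℤ) = ⌈G.density⌉ := hGS G (by rw [hχ]; exact hΔ)
  have hgt : (k : ℝ) < G.density := by
    have h1 : (k : ℤ) < ⌈G.density⌉ := by rw [← hGSG, hχ]; push_cast; omega
    exact Int.lt_ceil.1 h1
  obtain ⟨H1, h3, hodd1, hgtH⟩ : ∃ H' : G.Subgraph, 3 ≤ H'.verts.ncard ∧
      Odd H'.verts.ncard ∧
      (k : ℝ) < 2 * (H'.edges.ncard : ℝ) / ((H'.verts.ncard : ℝ) - 1) := by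
    by_contra hcon
    push_neg at hcon
    have hle : G.density ≤ (k : ℝ) := by
      rw [Multigraph.density, Multigraph.densityOf]
      apply Real.sSup_le
      · rintro xr ⟨H', -, -, h3, hodd, rfl⟩
        exact hcon H' h3 hodd
      · positivity
    linarith
  set S := H1.verts with hSdef
  set n1 := S.ncard with hn1def
  have hgtE : k * (n1 - 1) < 2 * H1.edges.ncard := by
    have hnR : (1 : ℝ) < (n1 : ℝ) := by exact_mod_cast (by omega : 1 < n1)
    have h2 : (k : ℝ) * ((n1 : ℝ) - 1) < 2 * (H1.edges.ncard : ℝ) :=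
      (lt_div_iff₀ (by linarith)).1 hgtH
    have hcast : ((n1 - 1 : ℕ) : ℝ) = (n1 : ℝ) - 1 := by
      push_cast [Nat.cast_sub (show 1 ≤ n1 by omega)]
      ring
    rw [← hcast] at h2
    exact_mod_cast h2
  have hein : e ∈ H1.edges := by
    by_contra hee
    have hsub : H1.edges ⊆ G.indSet D S := fun f hf =>
      ⟨(hmemD f).2 (fun hfe => hee (hfe ▸ hf)), H1.support f hf⟩
    have hb := Multigraph.bound_odd hc hodd1
      (fun f (hf : f ∈ G.indSet D S) => hf.1) (fun f hf v hv => hf.2 v hv)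
    rw [← hn1def] at hb
    have hle := Set.ncard_le_ncard hsub (Set.toFinite _)
    have hmp := Multigraph.mul_pred_add (k := k) (n := n1) (by omega)
    omega
  obtain ⟨m1, hm1⟩ := hodd1
  have hodd1' : Odd n1 := ⟨m1, hm1⟩
  have hkn2 : k * (n1 - 1) = 2 * (k * m1) := by
    rw [hm1, Nat.add_sub_cancel]; ring
  have hkn : k * n1 = 2 * (k * m1) + k := by rw [hm1]; ring
  have hindS : 2 * (G.indSet D S).ncard + k = k * n1 := by
    have hsub : H1.edges \ {e} ⊆ G.indSet D S := by
      rintro f ⟨hf, hfe⟩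
      exact ⟨(hmemD f).2 (by simpa using hfe), H1.support f hf⟩
    have hdiffcard : (H1.edges \ {e}).ncard = H1.edges.ncard - 1 :=
      Set.ncard_diff_singleton_of_mem hein
    have hle := Set.ncard_le_ncard hsub (Set.toFinite _)
    have hb := Multigraph.bound_odd hc hodd1'
      (fun f (hf : f ∈ G.indSet D S) => hf.1) (fun f hf v hv => hf.2 v hv)
    rw [← hn1def] at hb
    have hE1 : 0 < H1.edges.ncard := (Set.ncard_pos (Set.toFinite _)).2 ⟨e, hein⟩
    omega
  have hexS : ∀ v ∈ G.ends e, v ∈ S := fun v hv => H1.support e hein v hv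
  -- the family of k-dense subgraphs of G-e containing both ends of e
  have hJ0dense : G.IsDenseIn {e} k ⟨S, G.indSet D S, fun f hf v hv => hf.2 v hv⟩ := by
    constructor
    · rw [Set.eq_empty_iff_forall_notMem]
      rintro f ⟨hfD, hfe⟩
      exact (hmemD f).1 hfD.1 (by simpa using hfe)
    · refine ⟨hodd1', ?_⟩
      show 2 * (G.indSet D S).ncard = (n1 - 1) * k
      have := Multigraph.mul_pred_add (k := k) (n := n1) (by omega)
      rw [mul_comm _ k]
      omega
  set NS : Set ℕ := {n | ∃ J : G.Subgraph, G.IsDenseIn {e} k J ∧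
    (∀ v ∈ G.ends e, v ∈ J.verts) ∧ J.verts.ncard = n} with hNSdef
  have hNSne : NS.Nonempty :=
    ⟨n1, ⟨S, G.indSet D S, fun f hf v hv => hf.2 v hv⟩, hJ0dense, hexS, rfl⟩
  have hNSbdd : BddAbove NS := by
    refine ⟨Fintype.card G.V, ?_⟩
    rintro n ⟨J, -, -, rfl⟩
    have := Set.ncard_le_ncard (Set.subset_univ J.verts) (Set.toFinite _)
    rwa [Set.ncard_univ, Nat.card_eq_fintype_card] at this
  obtain ⟨J, hJdense, hJends, hJN⟩ := Nat.sSup_mem hNSne hNSbdd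
  have hJD : J.edges ⊆ D := by
    intro f hf
    rw [hmemD]
    intro hfe
    have h0 : f ∈ J.edges ∩ {e} := ⟨hf, by simp [hfe]⟩
    rw [hJdense.1] at h0
    exact h0
  obtain ⟨hJind, hJeq⟩ := Multigraph.dense_ind hc hJD hJdense.2
  set H : G.Subgraph := ⟨J.verts, G.indSet D J.verts, fun f hf v hv => hf.2 v hv⟩
    with hHdef
  have hHedges : H.edges = G.indSet D J.verts := rfl
  have hHverts : H.verts = J.verts := rfl
  have hHodd : Odd H.verts.ncard := hJdense.2.1
  have hHcount : 2 * H.edges.ncard + k = k * H.verts.ncard := hJind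
  have hHends : ∀ v ∈ G.ends e, v ∈ H.verts := hJends
  have hHD : H.edges ⊆ D := fun f hf => hf.1
  have hHdense : G.IsDenseIn {e} k H := by
    constructor
    · rw [Set.eq_empty_iff_forall_notMem]
      rintro f ⟨hfD, hfe⟩
      exact (hmemD f).1 hfD.1 (by simpa using hfe)
    · refine ⟨hHodd, ?_⟩
      show 2 * H.edges.ncard = (H.verts.ncard - 1) * k
      have h1le : 1 ≤ H.verts.ncard := by obtain ⟨m, hm⟩ := hHodd; omega
      have := Multigraph.mul_pred_add (k := k) (n := H.verts.ncard) h1le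
      rw [mul_comm _ k]
      omega
  have hHmax : G.IsMaximalDenseIn {e} k H := by
    refine ⟨hHdense, ?_⟩
    intro H2 hH2 hsubv hsube
    have hvend : ∀ v ∈ G.ends e, v ∈ H2.verts := fun v hv => hsubv (hHends v hv)
    have hmem : H2.verts.ncard ∈ NS := ⟨H2, hH2, hvend, rfl⟩
    have hle2 : H2.verts.ncard ≤ sSup NS := le_csSup hNSbdd hmem
    have hveq : H.verts = H2.verts := by
      refine Set.eq_of_subset_of_ncard_le hsubv ?_ (Set.toFinite _)
      rw [hHverts, hJN]
      exact hle2
    have hcards : H2.edges.ncard ≤ H.edges.ncard := by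
      have d1 := hHdense.2.2
      have d2 := hH2.2.2
      rw [← hveq] at d2
      omega
    exact ⟨hveq, Set.eq_of_subset_of_ncard_le hsube hcards (Set.toFinite _)⟩
  have hxH : x ∈ H.verts := hHends x hxe
  have hyH : y ∈ H.verts := hHends y hye
  have hnH3 : 3 ≤ H.verts.ncard := by
    have hpair : ({x, y} : Set G.V) ⊆ H.verts := by
      rintro v (rfl | rfl)
      · exact hxH
      · exact hyH
    have h2 : 2 ≤ H.verts.ncard := by
      have := Set.ncard_le_ncard hpair (Set.toFinite _)
      rwa [Set.ncard_pair hxy] at this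
    obtain ⟨m, hm⟩ := hHodd
    omega
  have hchromH : G.chromIndexOn H.edges = k := by
    apply le_antisymm
    · exact Multigraph.chromIndexOn_le (hc.mono hHD)
    · refine Multigraph.le_chromIndexOn fun j c' hc' => ?_
      have hb := Multigraph.bound_odd hc' hHodd (fun f hf => hf)
        (fun f hf v hv => H.support f hf v hv)
      exact Multigraph.ge_of_bounds hnH3 hHcount hb
  have heH : e ∉ H.edges := fun hf => (hmemD e).1 (hHD hf) rfl
  have hchromHe : G.chromIndexOn (insert e H.edges) = k + 1 := by
    apply le_antisymm
    · obtain ⟨c1, hc1⟩ := Multigraph.chromIndexOn_witness (G := G) Set.univ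
      have hχ' : G.chromIndexOn Set.univ = k + 1 := hχ
      rw [hχ'] at hc1
      exact Multigraph.chromIndexOn_le (hc1.mono (Set.subset_univ _))
    · refine Multigraph.le_chromIndexOn fun j c' hc' => ?_
      have hb := Multigraph.bound_odd hc' hHodd (fun f hf => hf)
        (fun f hf v hv => by
          rcases Set.mem_insert_iff.1 hf with rfl | hf'
          · exact hHends v hv
          · exact H.support f hf' v hv)
      rw [Set.ncard_insert_of_notMem heH (Set.toFinite _)] at hb
      exact Multigraph.ge_of_bounds' hnH3 hHcount hb
  refine ⟨H, ⟨hHmax, hHends, hchromH, hchromHe⟩, ?_⟩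
  -- uniqueness
  intro H2 hH2max hH2ends
  have hH2D : H2.edges ⊆ D := by
    intro f hf
    rw [hmemD]
    intro hfe
    have h0 : f ∈ H2.edges ∩ {e} := ⟨hf, by simp [hfe]⟩
    rw [hH2max.1.1] at h0
    exact h0
  obtain ⟨hind2, hedges2⟩ := Multigraph.dense_ind hc hH2D hH2max.1.2
  have hxdeg : {f | f ∈ D ∧ x ∈ G.ends f}.ncard < k := by
    have hseteq : {f | f ∈ D ∧ x ∈ G.ends f} = {f : G.E | x ∈ G.ends f} \ {e} := by
      ext f
      simp only [Set.mem_setOf_eq, Set.mem_diff, Set.mem_singleton_iff, hmemD f]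
      tauto
    have hdc : ({f : G.E | x ∈ G.ends f} \ {e}).ncard =
        {f : G.E | x ∈ G.ends f}.ncard - 1 :=
      Set.ncard_diff_singleton_of_mem (show e ∈ {f : G.E | x ∈ G.ends f} from hxe)
    have hdeg : {f : G.E | x ∈ G.ends f}.ncard ≤ G.maxDegree := by
      have h1 : G.degree x ≤ G.maxDegree :=
        le_csSup (Set.Finite.bddAbove (Set.finite_range G.degree))
          (Set.mem_range_self x)
      exact h1
    rw [hseteq, hdc]
    omega
  set V1 := H2.verts with hV1def
  set V2 := H.verts with hV2def
  have ho1 : Odd V1.ncard := hH2max.1.2.1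
  have ho2 : Odd V2.ncard := hHodd
  have hd2 : 2 * (G.indSet D V2).ncard + k = k * V2.ncard := hHcount
  have hTodd : Odd (V1 ∩ V2).ncard :=
    Multigraph.inter_odd hc ho1 ho2 hind2 hd2 (hH2ends x hxe) hxH hxdeg
  have hUsub : G.indSet D V1 ∪ G.indSet D V2 ⊆ G.indSet D (V1 ∪ V2) := by
    rintro f (hf | hf)
    · exact ⟨hf.1, fun v hv => Or.inl (hf.2 v hv)⟩
    · exact ⟨hf.1, fun v hv => Or.inr (hf.2 v hv)⟩
  have hTsub : G.indSet D V1 ∩ G.indSet D V2 ⊆ G.indSet D (V1 ∩ V2) :=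
    fun f hf => ⟨hf.1.1, fun v hv => ⟨hf.1.2 v hv, hf.2.2 v hv⟩⟩
  have hvsum := Set.ncard_union_add_ncard_inter V1 V2 (Set.toFinite _) (Set.toFinite _)
  have hesum := Set.ncard_union_add_ncard_inter (G.indSet D V1) (G.indSet D V2)
    (Set.toFinite _) (Set.toFinite _)
  have hUle := Set.ncard_le_ncard hUsub (Set.toFinite _)
  have hTle := Set.ncard_le_ncard hTsub (Set.toFinite _)
  have hUodd : Odd (V1 ∪ V2).ncard := by
    rw [Nat.odd_iff] at ho1 ho2 hTodd ⊢
    omega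
  have hbU := Multigraph.bound_odd hc hUodd
    (fun f (hf : f ∈ G.indSet D (V1 ∪ V2)) => hf.1) (fun f hf v hv => hf.2 v hv)
  have hbT := Multigraph.bound_odd hc hTodd
    (fun f (hf : f ∈ G.indSet D (V1 ∩ V2)) => hf.1) (fun f hf v hv => hf.2 v hv)
  have hksum : k * (V1 ∪ V2).ncard + k * (V1 ∩ V2).ncard =
      k * V1.ncard + k * V2.ncard := by
    have h0 := congrArg (fun t => k * t) hvsum
    simpa [mul_add] using h0
  have hUdense : 2 * (G.indSet D (V1 ∪ V2)).ncard + k = k * (V1 ∪ V2).ncard := by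
    omega
  set U : G.Subgraph := ⟨V1 ∪ V2, G.indSet D (V1 ∪ V2), fun f hf v hv => hf.2 v hv⟩
    with hUdef
  have hUdenseIn : G.IsDenseIn {e} k U := by
    constructor
    · rw [Set.eq_empty_iff_forall_notMem]
      rintro f ⟨hfD, hfe⟩
      exact (hmemD f).1 hfD.1 (by simpa using hfe)
    · refine ⟨hUodd, ?_⟩
      show 2 * (G.indSet D (V1 ∪ V2)).ncard = ((V1 ∪ V2).ncard - 1) * k
      have h1le : 1 ≤ (V1 ∪ V2).ncard := by obtain ⟨m, hm⟩ := hUodd; omega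
      have := Multigraph.mul_pred_add (k := k) (n := (V1 ∪ V2).ncard) h1le
      rw [mul_comm _ k]
      omega
  have hm2 := hH2max.2 U hUdenseIn Set.subset_union_left
    (fun f hf => ⟨hH2D hf, fun v hv => Or.inl (H2.support f hf v hv)⟩)
  have hmH := hHmax.2 U hUdenseIn Set.subset_union_right
    (fun f (hf : f ∈ G.indSet D J.verts) => ⟨hf.1, fun v hv => Or.inr (hf.2 v hv)⟩)
  exact Multigraph.Subgraph.ext' (hm2.1.trans hmH.1.symm) (hm2.2.trans hmH.2.symm)
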